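/- For n >= 2, the number of flattened {1}-insertion parking functions of order n with exactly 2 runs equals the Eulerian number A(n,1) = 2^n - n - 1, the number of permutations of [n] with exactly one descent. -/

import Mathlib

namespace FlatPF

/-- Decomposition of a word into maximal weakly increasing runs. -/
def runs : List ℕ → List (List ℕ)
  | [] => []
  | a :: l =>
    match runs l with
    | [] => [[a]]
    | [] :: rs => [a] :: rs
    | (b :: t) :: rs => if a ≤ b then (a :: b :: t) :: rs else [a] :: (b :: t) :: rs

/-- The number of maximal weakly increasing runs of a word. -/
def numRuns (w : List ℕ) : ℕ := (runs w).length

/-- A word is flattened if the leading values of its runs are weakly increasing. -/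
def IsFlattened (w : List ℕ) : Prop :=
  List.Chain' (· ≤ ·) ((runs w).map (fun r => r.headD 0))

/-- A word is a parking function: entries in `[m]` and the weakly increasing
rearrangement `(a'_1, …, a'_m)` satisfies `a'_i ≤ i`. -/
def IsPF (w : List ℕ) : Prop :=
  (∀ x ∈ w, 1 ≤ x ∧ x ≤ w.length) ∧
  ∀ i < w.length, (w.mergeSort (· ≤ ·)).getD i 0 ≤ i + 1

/-- `w` is obtained by inserting the elements of the multiset `S` into some
permutation of `[n]`, keeping the letters of the permutation in relative order. -/
def IsInsertion (S : Multiset ℕ) (n : ℕ) (w : List ℕ) : Prop :=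
  (↑w : Multiset ℕ) = ↑(List.range' 1 n) + S ∧
  ∃ p : List ℕ, p.Perm (List.range' 1 n) ∧ p.Sublist w

/-- Flattened `S`-insertion parking functions of order `n`. -/
def flatIns (S : Multiset ℕ) (n : ℕ) : Set (List ℕ) :=
  {w | IsInsertion S n w ∧ IsFlattened w}

/-- Flattened `S`-insertion parking functions of order `n` with exactly `k` runs. -/
def flatInsK (S : Multiset ℕ) (n k : ℕ) : Set (List ℕ) :=
  {w | IsInsertion S n w ∧ IsFlattened w ∧ numRuns w = k}

/-- `f(S; n, k)`, the number of flattened `S`-insertion parking functions of order `n`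
with exactly `k` runs.  In particular `fS 0 n k` is the number of flattened
permutations of `[n]` with `k` runs. -/
noncomputable def fS (S : Multiset ℕ) (n k : ℕ) : ℕ := (flatInsK S n k).ncard


lemma runs_spec (w : List ℕ) :
    (runs w).flatten = w ∧ (∀ r ∈ runs w, r ≠ [] ∧ r.IsChain (· ≤ ·)) ∧
    (runs w).IsChain (fun r s => s.headD 0 < r.getLastD 0) := by
  induction w with
  | nil => simp [runs]
  | cons a l ih =>
    obtain ⟨hj, hne, hd⟩ := ih
    rw [runs]
    rcases hr : runs l with - | ⟨r, rs⟩
    · rw [hr] at hj; simp at hj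
      subst hj
      simp [runs]
    · rcases r with - | ⟨b, t⟩
      · exact absurd rfl (hne _ (hr ▸ List.mem_cons_self)).1
      · rw [hr] at hj hne hd
        by_cases hab : a ≤ b
        · simp only [if_pos hab]
          refine ⟨by simpa using hj, ?_, ?_⟩
          · intro r hrm
            rcases List.mem_cons.mp hrm with h | h
            · subst h
              exact ⟨List.cons_ne_nil _ _,
                List.isChain_cons_cons.mpr ⟨hab, (hne _ (List.mem_cons_self)).2⟩⟩
            · exact hne _ (List.mem_cons_of_mem _ h)
          · rw [List.isChain_cons] at hd ⊢
            refine ⟨?_, hd.2⟩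
            intro s hs
            have := hd.1 s hs
            simpa [List.getLastD_cons] using this
        · simp only [if_neg hab]
          refine ⟨by simpa using hj, ?_, ?_⟩
          · intro r hrm
            rcases List.mem_cons.mp hrm with h | h
            · subst h; exact ⟨List.cons_ne_nil _ _, List.isChain_singleton _⟩
            · exact hne _ h
          · exact List.isChain_cons_cons.mpr ⟨by simpa using Nat.lt_of_not_le hab, hd⟩

lemma runs_join (w : List ℕ) : (runs w).flatten = w := (runs_spec w).1
lemma runs_ne_nil {w : List ℕ} {r : List ℕ} (h : r ∈ runs w) : r ≠ [] := ((runs_spec w).2.1 r h).1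
lemma runs_chain {w : List ℕ} {r : List ℕ} (h : r ∈ runs w) : r.IsChain (· ≤ ·) := ((runs_spec w).2.1 r h).2
lemma runs_desc (w : List ℕ) : (runs w).IsChain (fun r s => s.headD 0 < r.getLastD 0) := (runs_spec w).2.2

lemma runs_of_sorted : ∀ {l : List ℕ}, l.IsChain (· ≤ ·) → l ≠ [] → runs l = [l]
  | [], _, h => absurd rfl h
  | [a], _, _ => by simp [runs]
  | a :: b :: t, hc, _ => by
    rw [List.isChain_cons_cons] at hc
    rw [runs, runs_of_sorted hc.2 (List.cons_ne_nil _ _)]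
    dsimp only
    rw [if_pos hc.1]

lemma runs_append : ∀ {l₁ : List ℕ} (l₂ : List ℕ), l₁.IsChain (· ≤ ·) → l₁ ≠ [] → l₂ ≠ [] →
    l₂.headD 0 < l₁.getLastD 0 → runs (l₁ ++ l₂) = l₁ :: runs l₂
  | [], _, _, h, _, _ => absurd rfl h
  | [a], l₂, _, _, h2, hd => by
    rcases hr : runs l₂ with - | ⟨r, rs⟩
    · exact absurd (by simpa [hr] using runs_join l₂) h2
    · have hrne : r ≠ [] := runs_ne_nil (hr ▸ List.mem_cons_self)
      rcases r with - | ⟨b, t⟩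
      · exact absurd rfl hrne
      · have hhead : l₂.headD 0 = b := by
          have := runs_join l₂
          rw [hr] at this
          rw [← this]; simp
        have hda : l₂.headD 0 < a := by simpa [List.getLastD_cons] using hd
        rw [List.singleton_append, runs, hr]
        dsimp only
        rw [if_neg (by omega : ¬ a ≤ b)]
  | a :: c :: t, l₂, hc, _, h2, hd => by
    rw [List.isChain_cons_cons] at hc
    have ih := runs_append (l₁ := c :: t) l₂ hc.2 (List.cons_ne_nil _ _) h2
      (by simpa [List.getLastD_cons] using hd)
    rw [List.cons_append, runs, ih]
    dsimp only
    rw [if_pos hc.1]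


lemma runs_two {l1 l2 : List ℕ} (h1 : l1.IsChain (· ≤ ·)) (h2 : l2.IsChain (· ≤ ·))
    (n1 : l1 ≠ []) (n2 : l2 ≠ []) (hd : l2.headD 0 < l1.getLastD 0) :
    runs (l1 ++ l2) = [l1, l2] := by
  rw [runs_append l2 h1 n1 n2 hd, runs_of_sorted h2 n2]

lemma getLastD_indep : ∀ (l : List ℕ) (d : ℕ), l ≠ [] → l.getLastD d = l.getLastD 0
  | [], _, h => absurd rfl h
  | [c], d, _ => rfl
  | c :: b :: t, d, _ => by
    simp only [List.getLastD_cons]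

lemma headD_le {l : List ℕ} (h : l.IsChain (· ≤ ·)) {a : ℕ} (ha : a ∈ l) : l.headD 0 ≤ a := by
  rcases l with - | ⟨b, t⟩
  · simp at ha
  · rw [List.isChain_iff_pairwise] at h
    rcases List.mem_cons.mp ha with rfl | ha
    · simp
    · simpa using List.rel_of_pairwise_cons h ha

lemma le_getLastD : ∀ {l : List ℕ}, l.IsChain (· ≤ ·) → ∀ a ∈ l, a ≤ l.getLastD 0
  | [], _, a, ha => absurd ha (List.not_mem_nil)
  | [b], _, a, ha => by
    simp only [List.mem_singleton] at ha
    simp [ha]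
  | b :: c :: t, h, a, ha => by
    rw [List.isChain_cons_cons] at h
    rw [List.getLastD_cons, getLastD_indep (c :: t) b (List.cons_ne_nil _ _)]
    rcases List.mem_cons.mp ha with rfl | ha
    · exact le_trans h.1 (le_getLastD h.2 c (List.mem_cons_self))
    · exact le_getLastD h.2 a ha

lemma headD_mem {l : List ℕ} (h : l ≠ []) : l.headD 0 ∈ l := by
  rcases l with - | ⟨b, t⟩
  · exact absurd rfl h
  · simp

lemma getLastD_mem : ∀ {l : List ℕ}, l ≠ [] → l.getLastD 0 ∈ l
  | [], h => absurd rfl h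
  | [b], _ => by simp
  | b :: c :: t, _ => by
    rw [List.getLastD_cons, getLastD_indep (c :: t) b (List.cons_ne_nil _ _)]
    exact List.mem_cons_of_mem _ (getLastD_mem (List.cons_ne_nil _ _))

lemma sort_ne_nil {A : Finset ℕ} (h : A.Nonempty) : A.sort (· ≤ ·) ≠ [] := by
  intro hc
  have := Finset.length_sort (α := ℕ) (· ≤ ·) (s := A)
  rw [hc] at this
  simp only [List.length_nil] at this
  exact h.ne_empty (Finset.card_eq_zero.mp this.symm)

lemma chain'_sort (A : Finset ℕ) : (A.sort (· ≤ ·)).IsChain (· ≤ ·) :=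
  List.isChain_iff_pairwise.mpr (Finset.pairwise_sort _ _)

lemma eq_sort {l : List ℕ} (hs : l.IsChain (· ≤ ·)) (hn : l.Nodup) :
    Finset.sort l.toFinset (· ≤ ·) = l := by
  apply List.Perm.eq_of_pairwise' (r := (· ≤ ·)) (Finset.pairwise_sort _ _)
    (List.isChain_iff_pairwise.mp hs)
  rw [← Multiset.coe_eq_coe, Finset.sort_eq]
  show (l.dedup : Multiset ℕ) = _
  rw [List.dedup_eq_self.mpr hn]

/-- The generic counting lemma. -/
lemma card_filter_Q (m M : ℕ) :
    ((Finset.Icc m M).powerset.filter (fun A => A.Nonempty ∧ (Finset.Icc m M \ A).Nonempty ∧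
      ∃ a ∈ A, ∃ b ∈ Finset.Icc m M \ A, b < a)).card
    = 2 ^ (Finset.Icc m M).card - ((Finset.Icc m M).card + 1) := by
  set c := (Finset.Icc m M).card with hc
  have hcval : c = M + 1 - m := by rw [hc, Nat.card_Icc]
  have hbad : (Finset.Icc m M).powerset.filter (fun A => ¬(A.Nonempty ∧ (Finset.Icc m M \ A).Nonempty ∧
      ∃ a ∈ A, ∃ b ∈ Finset.Icc m M \ A, b < a))
      = (Finset.range (c + 1)).image (fun k => Finset.Ico m (m + k)) := by
    ext A
    simp only [Finset.mem_filter, Finset.mem_powerset, Finset.mem_image, Finset.mem_range]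
    constructor
    · rintro ⟨hsub, hnq⟩
      push_neg at hnq
      by_cases hA : A.Nonempty
      · by_cases hB : (Finset.Icc m M \ A).Nonempty
        · have hle : ∀ a ∈ A, ∀ b ∈ Finset.Icc m M \ A, a ≤ b := by
            intro a ha b hb
            exact hnq hA hB a ha b hb
          refine ⟨A.card, ?_, ?_⟩
          · exact Nat.lt_succ_of_le (Finset.card_le_card hsub)
          · -- A = Ico m (m + A.card)
            have hsub2 : A ⊆ Finset.Ico m (m + A.card) := by
              intro a ha
              have hIcoA : Finset.Ico m (a + 1) ⊆ A := by
                intro x hx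
                rw [Finset.mem_Ico] at hx
                by_contra hxA
                have haI := hsub ha
                rw [Finset.mem_Icc] at haI
                have hxI : x ∈ Finset.Icc m M \ A := by
                  rw [Finset.mem_sdiff, Finset.mem_Icc]
                  exact ⟨⟨hx.1, by omega⟩, hxA⟩
                have := hle a ha x hxI
                -- a ≤ x but x < a+1 and x ≠ a (x ∉ A, a ∈ A)
                have : x = a := by omega
                exact hxA (this ▸ ha)
              have hcard := Finset.card_le_card hIcoA
              rw [Nat.card_Ico] at hcard
              have ham : m ≤ a := by
                have := hsub ha; rw [Finset.mem_Icc] at this; exact this.1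
              rw [Finset.mem_Ico]
              omega
            symm
            apply Finset.eq_of_subset_of_card_le hsub2
            rw [Nat.card_Ico]
            omega
        · -- complement empty: A = Icc m M
          rw [Finset.not_nonempty_iff_eq_empty, Finset.sdiff_eq_empty_iff_subset] at hB
          have hAI : A = Finset.Icc m M := Finset.Subset.antisymm hsub hB
          refine ⟨c, Nat.lt_succ_self _, ?_⟩
          rw [hAI]
          ext x
          rw [Finset.mem_Icc, Finset.mem_Ico]
          omega
      · rw [Finset.not_nonempty_iff_eq_empty] at hA
        exact ⟨0, Nat.succ_pos _, by simp [hA]⟩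
    · rintro ⟨k, hk, rfl⟩
      constructor
      · intro x hx
        rw [Finset.mem_Ico] at hx
        rw [Finset.mem_Icc]
        omega
      · rintro ⟨hA, hB, a, ha, b, hb, hba⟩
        rw [Finset.mem_Ico] at ha
        rw [Finset.mem_sdiff, Finset.mem_Icc, Finset.mem_Ico] at hb
        omega
  have hbadcard : ((Finset.Icc m M).powerset.filter (fun A => ¬(A.Nonempty ∧ (Finset.Icc m M \ A).Nonempty ∧
      ∃ a ∈ A, ∃ b ∈ Finset.Icc m M \ A, b < a))).card = c + 1 := by
    rw [hbad, Finset.card_image_of_injOn, Finset.card_range]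
    intro k1 h1 k2 h2 he
    have h3 := congrArg Finset.card he
    simp only [Nat.card_Ico] at h3
    omega
  have htot := Finset.card_filter_add_card_filter_not
    (s := (Finset.Icc m M).powerset) (p := fun A => A.Nonempty ∧ (Finset.Icc m M \ A).Nonempty ∧
      ∃ a ∈ A, ∃ b ∈ Finset.Icc m M \ A, b < a)
  rw [hbadcard, Finset.card_powerset, ← hc] at htot
  omega

lemma icc_val (m n : ℕ) : ((Finset.Icc m n).val : Multiset ℕ) = ↑(List.range' m (n + 1 - m)) := by
  rw [Nat.Icc_eq_range']

lemma toFinset_nodup_val {l : List ℕ} (h : l.Nodup) : l.toFinset.val = (↑l : Multiset ℕ) := by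
  rw [List.toFinset, Multiset.toFinset_val]
  exact Multiset.dedup_eq_self.mpr (by exact_mod_cast h)

lemma toFinset_range' (m n : ℕ) : (List.range' m (n + 1 - m)).toFinset = Finset.Icc m n := by
  rw [← Finset.val_inj, toFinset_nodup_val (List.nodup_range'), icc_val]

/-- Structure of a word with exactly two runs. -/
lemma two_runs_struct {w : List ℕ} (h : numRuns w = 2) :
    ∃ r1 r2 : List ℕ, runs w = [r1, r2] ∧ w = r1 ++ r2 ∧ r1 ≠ [] ∧ r2 ≠ [] ∧
      r1.IsChain (· ≤ ·) ∧ r2.IsChain (· ≤ ·) ∧ r2.headD 0 < r1.getLastD 0 := by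
  obtain ⟨r1, r2, hr⟩ := List.length_eq_two.mp h
  refine ⟨r1, r2, hr, ?_, ?_, ?_, ?_, ?_, ?_⟩
  · have := runs_join w
    rw [hr] at this
    simpa using this.symm
  · exact runs_ne_nil (hr ▸ List.mem_cons_self)
  · exact runs_ne_nil (hr ▸ List.mem_cons_of_mem _ (List.mem_cons_self))
  · exact runs_chain (hr ▸ List.mem_cons_self)
  · exact runs_chain (hr ▸ List.mem_cons_of_mem _ (List.mem_cons_self))
  · have := runs_desc w
    rw [hr, List.isChain_pair] at this
    exact this

lemma perm_set_eq (n : ℕ) (hn : 2 ≤ n) :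
    {σ : List ℕ | σ.Perm (List.range' 1 n) ∧ numRuns σ = 2} =
    ↑(((Finset.Icc 1 n).powerset.filter (fun A => A.Nonempty ∧ (Finset.Icc 1 n \ A).Nonempty ∧
        ∃ a ∈ A, ∃ b ∈ Finset.Icc 1 n \ A, b < a)).image
      (fun A => Finset.sort A (· ≤ ·) ++ Finset.sort (Finset.Icc 1 n \ A) (· ≤ ·))) := by
  have hrn : (List.range' 1 n).toFinset = Finset.Icc 1 n := by
    have := toFinset_range' 1 n
    simpa using this
  ext w
  simp only [Set.mem_setOf_eq, Finset.coe_image, Set.mem_image, Finset.mem_coe,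
    Finset.mem_filter, Finset.mem_powerset]
  constructor
  · rintro ⟨hperm, hruns⟩
    obtain ⟨r1, r2, hr, hw, h1, h2, hc1, hc2, hd⟩ := two_runs_struct hruns
    have hnd : w.Nodup := (List.nodup_range' (s := 1) (n := n)).perm hperm.symm
    have hndw := hw ▸ hnd
    rw [List.nodup_append] at hndw
    have hwt : w.toFinset = Finset.Icc 1 n := by
      rw [← hrn]
      exact List.toFinset_eq_of_perm _ _ hperm
    have hsub : r1.toFinset ⊆ Finset.Icc 1 n := by
      rw [← hwt]
      intro x hx
      rw [List.mem_toFinset] at hx ⊢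
      rw [hw]
      exact List.mem_append_left _ hx
    have hBeq : Finset.Icc 1 n \ r1.toFinset = r2.toFinset := by
      ext x
      rw [Finset.mem_sdiff, ← hwt, List.mem_toFinset, List.mem_toFinset, List.mem_toFinset, hw,
        List.mem_append]
      constructor
      · rintro ⟨h3 | h3, h4⟩
        · exact absurd h3 h4
        · exact h3
      · intro h3
        exact ⟨Or.inr h3, fun h4 => hndw.2.2 x h4 x h3 rfl⟩
    refine ⟨r1.toFinset, ⟨hsub, ?_, ?_, r1.getLastD 0, ?_, r2.headD 0, ?_, hd⟩, ?_⟩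
    · exact ⟨r1.headD 0, List.mem_toFinset.mpr (headD_mem h1)⟩
    · rw [hBeq]
      exact ⟨r2.headD 0, List.mem_toFinset.mpr (headD_mem h2)⟩
    · exact List.mem_toFinset.mpr (getLastD_mem h1)
    · rw [hBeq]
      exact List.mem_toFinset.mpr (headD_mem h2)
    · rw [hBeq, eq_sort hc1 hndw.1, eq_sort hc2 hndw.2.1, hw]
  · rintro ⟨A, ⟨hsub, hA, hB, a, ha, b, hb, hba⟩, rfl⟩
    constructor
    · rw [← Multiset.coe_eq_coe]
      have hstep : (↑(Finset.sort A (· ≤ ·) ++ Finset.sort (Finset.Icc 1 n \ A) (· ≤ ·)) : Multiset ℕ)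
          = A.val + (Finset.Icc 1 n \ A).val := by
        show (↑(Finset.sort A (· ≤ ·)) + ↑(Finset.sort (Finset.Icc 1 n \ A) (· ≤ ·)) : Multiset ℕ) = _
        rw [Finset.sort_eq, Finset.sort_eq]
      rw [hstep, Finset.sdiff_val, add_tsub_cancel_of_le (Finset.val_le_iff.mpr hsub), icc_val]
      norm_num
    · show (runs _).length = 2
      rw [runs_two (chain'_sort _) (chain'_sort _) (sort_ne_nil hA) (sort_ne_nil hB) ?_]
      · rfl
      · calc ((Finset.Icc 1 n \ A).sort (· ≤ ·)).headD 0 ≤ b :=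
              headD_le (chain'_sort _) ((Finset.mem_sort _).mpr hb)
          _ < a := hba
          _ ≤ _ := le_getLastD (chain'_sort _) a ((Finset.mem_sort _).mpr ha)

lemma range'_split {n : ℕ} (hn : 1 ≤ n) : List.range' 1 n = 1 :: List.range' 2 (n - 1) := by
  obtain ⟨m, rfl⟩ : ∃ m, n = m + 1 := ⟨n - 1, by omega⟩
  rw [List.range'_succ]
  norm_num

lemma mkey {n : ℕ} (hn : 1 ≤ n) :
    (↑(List.range' 1 n) + {1} : Multiset ℕ) = 1 ::ₘ 1 ::ₘ ↑(List.range' 2 (n - 1)) := by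
  rw [range'_split hn, ← Multiset.cons_coe, add_comm, Multiset.singleton_add]

lemma icc2_val {n : ℕ} (hn : 1 ≤ n) :
    ((Finset.Icc 2 n).val : Multiset ℕ) = ↑(List.range' 2 (n - 1)) := by
  rw [icc_val]
  congr 2

lemma toFinset_range'2 {n : ℕ} (hn : 1 ≤ n) :
    (List.range' 2 (n - 1)).toFinset = Finset.Icc 2 n := by
  rw [← Finset.val_inj, toFinset_nodup_val (List.nodup_range'), icc2_val hn]

lemma isInsertion_iff {n : ℕ} (hn : 1 ≤ n) (w : List ℕ) :
    IsInsertion {1} n w ↔ (↑w : Multiset ℕ) = ↑(List.range' 1 n) + {1} := by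
  constructor
  · exact fun h => h.1
  · intro h
    refine ⟨h, w.erase 1, ?_, List.erase_sublist⟩
    have h1w : (1 : ℕ) ∈ w := by
      rw [← Multiset.mem_coe, h]
      simp
    rw [← Multiset.coe_eq_coe]
    have h2 : (1 : ℕ) ::ₘ ↑(w.erase 1) = 1 ::ₘ (↑(List.range' 1 n) : Multiset ℕ) := by
      rw [Multiset.cons_coe, Multiset.coe_eq_coe.mpr (List.perm_cons_erase h1w).symm, h,
        add_comm, Multiset.singleton_add]
    exact (Multiset.cons_inj_right _).mp h2

lemma chain'_cons_one {A : Finset ℕ} (hA : ∀ x ∈ A, 2 ≤ x) :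
    (1 :: Finset.sort A (· ≤ ·)).IsChain (· ≤ ·) := by
  rw [List.isChain_cons]
  refine ⟨?_, chain'_sort A⟩
  intro y hy
  have := hA y ((Finset.mem_sort _).mp (List.mem_of_mem_head? hy))
  omega

lemma getLastD_sort_mem {A : Finset ℕ} (hA : A.Nonempty) :
    (Finset.sort A (· ≤ ·)).getLastD 0 ∈ A :=
  (Finset.mem_sort _).mp (getLastD_mem (sort_ne_nil hA))

lemma runs_g1 {n : ℕ} {A : Finset ℕ} (hsub : A ⊆ Finset.Icc 2 n) (hA : A.Nonempty) :
    runs (1 :: Finset.sort A (· ≤ ·) ++ 1 :: Finset.sort (Finset.Icc 2 n \ A) (· ≤ ·)) =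
      [1 :: Finset.sort A (· ≤ ·), 1 :: Finset.sort (Finset.Icc 2 n \ A) (· ≤ ·)] := by
  have h2 : ∀ x ∈ A, 2 ≤ x := fun x hx => (Finset.mem_Icc.mp (hsub hx)).1
  apply runs_two (chain'_cons_one h2)
    (chain'_cons_one (fun x hx => (Finset.mem_Icc.mp (Finset.mem_sdiff.mp hx).1).1))
    (List.cons_ne_nil _ _) (List.cons_ne_nil _ _)
  show (1 : ℕ) < _
  rw [List.getLastD_cons, getLastD_indep _ _ (sort_ne_nil hA)]
  have := h2 _ (getLastD_sort_mem hA)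
  omega

lemma runs_g2 {n : ℕ} {A : Finset ℕ} (hsub : A ⊆ Finset.Icc 2 n)
    (hA : A.Nonempty) (hB : (Finset.Icc 2 n \ A).Nonempty)
    (hex : ∃ a ∈ A, ∃ b ∈ Finset.Icc 2 n \ A, b < a) :
    runs (1 :: 1 :: Finset.sort A (· ≤ ·) ++ Finset.sort (Finset.Icc 2 n \ A) (· ≤ ·)) =
      [1 :: 1 :: Finset.sort A (· ≤ ·), Finset.sort (Finset.Icc 2 n \ A) (· ≤ ·)] := by
  have h2 : ∀ x ∈ A, 2 ≤ x := fun x hx => (Finset.mem_Icc.mp (hsub hx)).1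
  obtain ⟨a, ha, b, hb, hba⟩ := hex
  apply runs_two ?_ (chain'_sort _) (List.cons_ne_nil _ _) (sort_ne_nil hB)
  · calc (Finset.sort (Finset.Icc 2 n \ A) (· ≤ ·)).headD 0 ≤ b :=
        headD_le (chain'_sort _) ((Finset.mem_sort _).mpr hb)
      _ < a := hba
      _ ≤ (Finset.sort A (· ≤ ·)).getLastD 0 :=
        le_getLastD (chain'_sort _) a ((Finset.mem_sort _).mpr ha)
      _ = _ := by
        rw [List.getLastD_cons, List.getLastD_cons, getLastD_indep _ _ (sort_ne_nil hA),
          getLastD_indep _ (1 : ℕ) (sort_ne_nil hA)]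
  · rw [List.isChain_cons_cons]
    exact ⟨le_refl 1, chain'_cons_one h2⟩

lemma ins_set_eq (n : ℕ) (hn : 2 ≤ n) :
    flatInsK {1} n 2 =
    ↑((((Finset.Icc 2 n).powerset.filter (fun A => A.Nonempty)).image
        (fun A => 1 :: Finset.sort A (· ≤ ·) ++ 1 :: Finset.sort (Finset.Icc 2 n \ A) (· ≤ ·))) ∪
      (((Finset.Icc 2 n).powerset.filter (fun A => A.Nonempty ∧ (Finset.Icc 2 n \ A).Nonempty ∧
          ∃ a ∈ A, ∃ b ∈ Finset.Icc 2 n \ A, b < a)).image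
        (fun A => 1 :: 1 :: Finset.sort A (· ≤ ·) ++ Finset.sort (Finset.Icc 2 n \ A) (· ≤ ·)))) := by
  have hn1 : 1 ≤ n := by omega
  ext w
  simp only [flatInsK, Set.mem_setOf_eq, Finset.coe_union, Set.mem_union, Finset.coe_image,
    Set.mem_image, Finset.mem_coe, Finset.mem_filter, Finset.mem_powerset]
  rw [isInsertion_iff hn1]
  constructor
  · rintro ⟨hm, hflat, hruns⟩
    obtain ⟨r1, r2, hr, hw, h1, h2, hc1, hc2, hd⟩ := two_runs_struct hruns
    have hmem1 : ∀ x ∈ w, 1 ≤ x := by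
      intro x hx
      have hx' : x ∈ (↑w : Multiset ℕ) := by exact_mod_cast hx
      rw [hm, Multiset.mem_add] at hx'
      rcases hx' with h | h
      · exact (List.mem_range'_1.mp (by exact_mod_cast h)).1
      · rw [Multiset.mem_singleton] at h; omega
    have hflat2 : r1.headD 0 ≤ r2.headD 0 := by
      have hf := hflat
      unfold IsFlattened List.Chain' at hf
      rw [hr] at hf
      simpa using hf
    have h1w : (1 : ℕ) ∈ w := by
      rw [← Multiset.mem_coe, hm]
      simp
    have hh1 : r1.headD 0 = 1 := by
      have hub : r1.headD 0 ≤ 1 := by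
        rw [hw, List.mem_append] at h1w
        rcases h1w with h | h
        · exact headD_le hc1 h
        · exact le_trans hflat2 (headD_le hc2 h)
      have hlb : 1 ≤ r1.headD 0 :=
        hmem1 _ (by rw [hw]; exact List.mem_append_left _ (headD_mem h1))
      omega
    rcases r1 with - | ⟨a1, t1⟩
    · exact absurd rfl h1
    rcases r2 with - | ⟨b1, t2⟩
    · exact absurd rfl h2
    simp only [List.headD_cons] at hh1 hflat2
    subst hh1
    by_cases hb1 : b1 = 1
    · subst hb1
      left
      have hmm : (↑(t1 ++ t2) : Multiset ℕ) = ↑(List.range' 2 (n - 1)) := by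
        have hx : (↑w : Multiset ℕ) = 1 ::ₘ 1 ::ₘ ↑(t1 ++ t2) := by
          rw [hw]
          show (↑(1 :: t1) + ↑(1 :: t2) : Multiset ℕ) = _
          rw [← Multiset.cons_coe, ← Multiset.cons_coe, Multiset.cons_add, Multiset.add_cons]
          rfl
        rw [hm, mkey hn1] at hx
        exact ((Multiset.cons_inj_right _).mp ((Multiset.cons_inj_right _).mp hx)).symm
      have hperm : (t1 ++ t2).Perm (List.range' 2 (n - 1)) := Multiset.coe_eq_coe.mp hmm
      have hnd : (t1 ++ t2).Nodup := (List.nodup_range' (s := 2) (n := n - 1)).perm hperm.symm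
      have hnd2 := List.nodup_append.mp hnd
      have htf : (t1 ++ t2).toFinset = Finset.Icc 2 n := by
        rw [List.toFinset_eq_of_perm _ _ hperm, toFinset_range'2 hn1]
      have ht1ne : t1 ≠ [] := by
        rintro rfl
        simp [List.getLastD_cons] at hd
      have hsub : t1.toFinset ⊆ Finset.Icc 2 n := by
        rw [← htf]
        intro x hx
        rw [List.mem_toFinset] at hx ⊢
        exact List.mem_append_left _ hx
      have hBeq : Finset.Icc 2 n \ t1.toFinset = t2.toFinset := by
        ext x
        rw [Finset.mem_sdiff, ← htf, List.mem_toFinset, List.mem_toFinset, List.mem_toFinset,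
          List.mem_append]
        constructor
        · rintro ⟨h3 | h3, h4⟩
          · exact absurd h3 h4
          · exact h3
        · intro h3
          exact ⟨Or.inr h3, fun h4 => hnd2.2.2 x h4 x h3 rfl⟩
      refine ⟨t1.toFinset, ⟨hsub, ⟨t1.headD 0, List.mem_toFinset.mpr (headD_mem ht1ne)⟩⟩, ?_⟩
      rw [hBeq, eq_sort (l := t1) hc1.tail hnd2.1, eq_sort (l := t2) hc2.tail hnd2.2.1, hw]
    · right
      have hb2 : 2 ≤ b1 := by
        have := hmem1 b1 (by rw [hw]; exact List.mem_append_right _ (List.mem_cons_self))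
        omega
      have hcw : w.count 1 = 2 := by
        have hc := congrArg (Multiset.count 1) hm
        rw [Multiset.coe_count, Multiset.count_add, Multiset.coe_count] at hc
        rw [hc, List.count_eq_one_of_mem (List.nodup_range')
          (by rw [List.mem_range'_1]; omega)]
        simp
      have hcr2 : (b1 :: t2).count 1 = 0 := by
        rw [List.count_eq_zero]
        intro hmem
        have := headD_le hc2 hmem
        simp only [List.headD_cons] at this
        omega
      have h1t1 : (1 : ℕ) ∈ t1 := by
        rw [hw, List.count_append, hcr2, List.count_cons_self] at hcw
        exact List.count_pos_iff.mp (by omega)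
      have ht1ne : t1 ≠ [] := List.ne_nil_of_mem h1t1
      have hht1 : t1.headD 0 = 1 := by
        have hub := headD_le (l := t1) hc1.tail h1t1
        have hlb := hmem1 (t1.headD 0)
          (by rw [hw]
              exact List.mem_append_left _ (List.mem_cons_of_mem _ (headD_mem ht1ne)))
        omega
      rcases t1 with - | ⟨c1, t1'⟩
      · exact absurd rfl ht1ne
      simp only [List.headD_cons] at hht1
      subst hht1
      have hmm : (↑(t1' ++ (b1 :: t2)) : Multiset ℕ) = ↑(List.range' 2 (n - 1)) := by
        have hx : (↑w : Multiset ℕ) = 1 ::ₘ 1 ::ₘ ↑(t1' ++ (b1 :: t2)) := by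
          rw [hw]
          show (↑(1 :: 1 :: t1') + ↑(b1 :: t2) : Multiset ℕ) = _
          rw [← Multiset.cons_coe, ← Multiset.cons_coe, Multiset.cons_add, Multiset.cons_add]
          rfl
        rw [hm, mkey hn1] at hx
        exact ((Multiset.cons_inj_right _).mp ((Multiset.cons_inj_right _).mp hx)).symm
      have hperm : (t1' ++ (b1 :: t2)).Perm (List.range' 2 (n - 1)) := Multiset.coe_eq_coe.mp hmm
      have hnd : (t1' ++ (b1 :: t2)).Nodup := (List.nodup_range' (s := 2) (n := n - 1)).perm hperm.symm
      have hnd2 := List.nodup_append.mp hnd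
      have htf : (t1' ++ (b1 :: t2)).toFinset = Finset.Icc 2 n := by
        rw [List.toFinset_eq_of_perm _ _ hperm, toFinset_range'2 hn1]
      have ht1'ne : t1' ≠ [] := by
        rintro rfl
        simp [List.getLastD_cons] at hd
        omega
      have hgl : (1 :: 1 :: t1').getLastD 0 = t1'.getLastD 0 := by
        rw [List.getLastD_cons, List.getLastD_cons, getLastD_indep _ _ ht1'ne]
      have hsub : t1'.toFinset ⊆ Finset.Icc 2 n := by
        rw [← htf]
        intro x hx
        rw [List.mem_toFinset] at hx ⊢
        exact List.mem_append_left _ hx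
      have hBeq : Finset.Icc 2 n \ t1'.toFinset = (b1 :: t2).toFinset := by
        ext x
        rw [Finset.mem_sdiff, ← htf, List.mem_toFinset, List.mem_toFinset, List.mem_toFinset,
          List.mem_append]
        constructor
        · rintro ⟨h3 | h3, h4⟩
          · exact absurd h3 h4
          · exact h3
        · intro h3
          exact ⟨Or.inr h3, fun h4 => hnd2.2.2 x h4 x h3 rfl⟩
      have hdlt : b1 < t1'.getLastD 0 := by
        rw [hgl] at hd
        simpa using hd
      refine ⟨t1'.toFinset, ⟨hsub, ⟨t1'.headD 0, List.mem_toFinset.mpr (headD_mem ht1'ne)⟩,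
        ?_, t1'.getLastD 0, List.mem_toFinset.mpr (getLastD_mem ht1'ne), b1, ?_, hdlt⟩, ?_⟩
      · rw [hBeq]
        exact ⟨b1, List.mem_toFinset.mpr (List.mem_cons_self)⟩
      · rw [hBeq]
        exact List.mem_toFinset.mpr (List.mem_cons_self)
      · rw [hBeq, eq_sort (l := t1') hc1.tail.tail hnd2.1, eq_sort (l := b1 :: t2) hc2 hnd2.2.1, hw]
  · rintro (⟨A, ⟨hsub, hA⟩, rfl⟩ | ⟨A, ⟨hsub, hA, hB, a, ha, b, hb, hba⟩, rfl⟩)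
    · have hrg := runs_g1 hsub hA
      refine ⟨?_, ?_, ?_⟩
      · rw [mkey hn1]
        show (↑(1 :: _) + ↑(1 :: _) : Multiset ℕ) = _
        rw [← Multiset.cons_coe, ← Multiset.cons_coe, Multiset.cons_add, Multiset.add_cons,
          Multiset.cons_inj_right, Multiset.cons_inj_right]
        show (↑(Finset.sort A (· ≤ ·)) + ↑(Finset.sort (Finset.Icc 2 n \ A) (· ≤ ·)) :
          Multiset ℕ) = _
        rw [Finset.sort_eq, Finset.sort_eq, Finset.sdiff_val,
          add_tsub_cancel_of_le (Finset.val_le_iff.mpr hsub), icc2_val hn1]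
      · unfold IsFlattened List.Chain'
        rw [hrg]
        simp
      · show (runs _).length = 2
        rw [hrg]
        rfl
    · have hrg := runs_g2 hsub hA hB ⟨a, ha, b, hb, hba⟩
      refine ⟨?_, ?_, ?_⟩
      · rw [mkey hn1]
        show (↑(1 :: 1 :: (Finset.sort A (· ≤ ·) ++ Finset.sort (Finset.Icc 2 n \ A) (· ≤ ·))) :
          Multiset ℕ) = _
        rw [← Multiset.cons_coe, ← Multiset.cons_coe,
          Multiset.cons_inj_right, Multiset.cons_inj_right]
        show (↑(Finset.sort A (· ≤ ·)) + ↑(Finset.sort (Finset.Icc 2 n \ A) (· ≤ ·)) :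
          Multiset ℕ) = _
        rw [Finset.sort_eq, Finset.sort_eq, Finset.sdiff_val,
          add_tsub_cancel_of_le (Finset.val_le_iff.mpr hsub), icc2_val hn1]
      · unfold IsFlattened List.Chain'
        rw [hrg]
        have h2b : 2 ≤ ((Finset.Icc 2 n \ A).sort (· ≤ ·)).headD 0 := by
          have hm2 := (Finset.mem_sort (α := ℕ) (· ≤ ·)).mp (headD_mem (sort_ne_nil hB))
          exact (Finset.mem_Icc.mp (Finset.mem_sdiff.mp hm2).1).1
        simp only [List.map_cons, List.map_nil, List.headD_cons, List.isChain_pair]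
        omega
      · show (runs _).length = 2
        rw [hrg]
        rfl

lemma runs_gp {n : ℕ} {A : Finset ℕ} (hA : A.Nonempty) (hB : (Finset.Icc 1 n \ A).Nonempty)
    (hex : ∃ a ∈ A, ∃ b ∈ Finset.Icc 1 n \ A, b < a) :
    runs (Finset.sort A (· ≤ ·) ++ Finset.sort (Finset.Icc 1 n \ A) (· ≤ ·)) =
      [Finset.sort A (· ≤ ·), Finset.sort (Finset.Icc 1 n \ A) (· ≤ ·)] := by
  obtain ⟨a, ha, b, hb, hba⟩ := hex
  apply runs_two (chain'_sort _) (chain'_sort _) (sort_ne_nil hA) (sort_ne_nil hB)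
  calc (Finset.sort (Finset.Icc 1 n \ A) (· ≤ ·)).headD 0 ≤ b :=
      headD_le (chain'_sort _) ((Finset.mem_sort _).mpr hb)
    _ < a := hba
    _ ≤ _ := le_getLastD (chain'_sort _) a ((Finset.mem_sort _).mpr ha)

end FlatPF
open FlatPF in
/-- For `n ≥ 2`, the number of flattened `{1}`-insertion parking functions of order
`n` with exactly two runs is the Eulerian number `A(n,1) = 2^n - n - 1`, the number of
permutations of `[n]` with exactly one descent (equivalently, two runs). -/
theorem stmt15 (n : ℕ) (hn : 2 ≤ n) :
    fS {1} n 2 = 2 ^ n - n - 1 ∧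
    fS {1} n 2 = {σ : List ℕ | σ.Perm (List.range' 1 n) ∧ numRuns σ = 2}.ncard := by
  have hn1 : 1 ≤ n := by omega
  have hicc2 : (Finset.Icc 2 n).card = n - 1 := by rw [Nat.card_Icc]; omega
  have hicc1 : (Finset.Icc 1 n).card = n := by rw [Nat.card_Icc]; omega
  have hT2card := card_filter_Q 2 n
  have hTpcard := card_filter_Q 1 n
  rw [hicc2] at hT2card
  rw [hicc1] at hTpcard
  have hT1card : (((Finset.Icc 2 n).powerset.filter (fun A => A.Nonempty))).card
      = 2 ^ (n - 1) - 1 := by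
    have htot := Finset.card_filter_add_card_filter_not
      (s := (Finset.Icc 2 n).powerset) (p := fun A => A.Nonempty)
    have hneg : (Finset.Icc 2 n).powerset.filter (fun A => ¬ A.Nonempty) = {∅} := by
      ext A
      simp only [Finset.mem_filter, Finset.mem_powerset, Finset.not_nonempty_iff_eq_empty,
        Finset.mem_singleton]
      exact ⟨fun h => h.2, fun h => ⟨h ▸ Finset.empty_subset _, h⟩⟩
    rw [hneg, Finset.card_singleton, Finset.card_powerset, hicc2] at htot
    omega
  have hinj1 : Set.InjOn
      (fun A : Finset ℕ =>
        1 :: Finset.sort A (· ≤ ·) ++ 1 :: Finset.sort (Finset.Icc 2 n \ A) (· ≤ ·))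
      ↑((Finset.Icc 2 n).powerset.filter (fun A => A.Nonempty)) := by
    intro A hA A' hA' he
    simp only [Finset.coe_filter, Set.mem_setOf_eq, Finset.mem_powerset] at hA hA'
    have h1 := runs_g1 hA.1 hA.2
    have h2 := runs_g1 hA'.1 hA'.2
    have hre := congrArg runs he
    simp only [h1, h2, List.cons.injEq, true_and, and_true] at hre
    have h4 := congrArg List.toFinset hre.1
    rwa [Finset.sort_toFinset, Finset.sort_toFinset] at h4
  have hinj2 : Set.InjOn
      (fun A : Finset ℕ =>
        1 :: 1 :: Finset.sort A (· ≤ ·) ++ Finset.sort (Finset.Icc 2 n \ A) (· ≤ ·))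
      ↑((Finset.Icc 2 n).powerset.filter (fun A => A.Nonempty ∧ (Finset.Icc 2 n \ A).Nonempty ∧
          ∃ a ∈ A, ∃ b ∈ Finset.Icc 2 n \ A, b < a)) := by
    intro A hA A' hA' he
    simp only [Finset.coe_filter, Set.mem_setOf_eq, Finset.mem_powerset] at hA hA'
    have h1 := runs_g2 hA.1 hA.2.1 hA.2.2.1 hA.2.2.2
    have h2 := runs_g2 hA'.1 hA'.2.1 hA'.2.2.1 hA'.2.2.2
    have hre := congrArg runs he
    simp only [h1, h2, List.cons.injEq, true_and, and_true] at hre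
    have h4 := congrArg List.toFinset hre.1
    rwa [Finset.sort_toFinset, Finset.sort_toFinset] at h4
  have hinjp : Set.InjOn
      (fun A : Finset ℕ =>
        Finset.sort A (· ≤ ·) ++ Finset.sort (Finset.Icc 1 n \ A) (· ≤ ·))
      ↑((Finset.Icc 1 n).powerset.filter (fun A => A.Nonempty ∧ (Finset.Icc 1 n \ A).Nonempty ∧
          ∃ a ∈ A, ∃ b ∈ Finset.Icc 1 n \ A, b < a)) := by
    intro A hA A' hA' he
    simp only [Finset.coe_filter, Set.mem_setOf_eq, Finset.mem_powerset] at hA hA'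
    have h1 := runs_gp hA.2.1 hA.2.2.1 hA.2.2.2
    have h2 := runs_gp hA'.2.1 hA'.2.2.1 hA'.2.2.2
    have hre := congrArg runs he
    simp only [h1, h2, List.cons.injEq, true_and, and_true] at hre
    have h4 := congrArg List.toFinset hre.1
    rwa [Finset.sort_toFinset, Finset.sort_toFinset] at h4
  have hdisj : Disjoint
      (((Finset.Icc 2 n).powerset.filter (fun A => A.Nonempty)).image
        (fun A => 1 :: Finset.sort A (· ≤ ·) ++ 1 :: Finset.sort (Finset.Icc 2 n \ A) (· ≤ ·)))
      (((Finset.Icc 2 n).powerset.filter (fun A => A.Nonempty ∧ (Finset.Icc 2 n \ A).Nonempty ∧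
          ∃ a ∈ A, ∃ b ∈ Finset.Icc 2 n \ A, b < a)).image
        (fun A => 1 :: 1 :: Finset.sort A (· ≤ ·) ++
          Finset.sort (Finset.Icc 2 n \ A) (· ≤ ·))) := by
    rw [Finset.disjoint_left]
    rintro w hw1 hw2
    rw [Finset.mem_image] at hw1 hw2
    obtain ⟨A, hA, rfl⟩ := hw1
    obtain ⟨A', hA', heq⟩ := hw2
    rw [Finset.mem_filter, Finset.mem_powerset] at hA hA'
    have h1 := runs_g1 hA.1 hA.2
    have h2 := runs_g2 hA'.1 hA'.2.1 hA'.2.2.1 hA'.2.2.2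
    have hre := congrArg runs heq
    simp only [h1, h2, List.cons.injEq] at hre
    -- second components: sort (Icc 2 n \ A') = 1 :: sort (Icc 2 n \ A)
    have hsec : Finset.sort (Finset.Icc 2 n \ A') (· ≤ ·) =
        1 :: Finset.sort (Finset.Icc 2 n \ A) (· ≤ ·) := hre.2.1
    have h1mem : (1 : ℕ) ∈ Finset.Icc 2 n \ A' := by
      rw [← Finset.mem_sort (· ≤ ·), hsec]
      exact List.mem_cons_self
    have := (Finset.mem_Icc.mp (Finset.mem_sdiff.mp h1mem).1).1
    omega
  have hfS : fS {1} n 2 = (2 ^ (n - 1) - 1) + (2 ^ (n - 1) - (n - 1 + 1)) := by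
    rw [fS, ins_set_eq n hn, Set.ncard_coe_finset,
      Finset.card_union_of_disjoint hdisj,
      Finset.card_image_of_injOn hinj1, Finset.card_image_of_injOn hinj2, hT1card, hT2card]
  have hpermc : {σ : List ℕ | σ.Perm (List.range' 1 n) ∧ numRuns σ = 2}.ncard
      = 2 ^ n - (n + 1) := by
    rw [perm_set_eq n hn, Set.ncard_coe_finset, Finset.card_image_of_injOn hinjp, hTpcard]
  have hpow : 2 ^ n = 2 ^ (n - 1) * 2 := by
    rw [← pow_succ]
    congr 1
    omega
  have h2pown : n ≤ 2 ^ (n - 1) := by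
    have := Nat.lt_two_pow_self (n := n - 1)
    omega
  constructor
  · rw [hfS]
    omega
  · rw [hfS, hpermc]
    omega
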